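/- The minimalist semantic sketch construction is a full embedding: assuming carriers are contexts, the assignment U ↦ S^U_P = (U₀, { (α(p) ⊢ p(id), ι) | p ∈ P, ι ∈ ⟦p⟧ᵁ }) on objects and ς ↦ ς on morphisms defines a functor from the category of Σ-structures Sem(Σ) to Sketch(Σ) that is full and faithful. -/

import Mathlib

open CategoryTheory

universe u v

variable {B : Type u} [Category.{v} B]

/-- A footprint: a set of feature symbols with arities in the base category. -/
structure Footprint (B : Type u) [Category.{v} B] where
  P : Type
  ar : P → B

variable {Sg : Footprint B}

/-- A Σ-structure: a carrier object plus a set of valid interpretations for each symbol. -/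
structure Str (Sg : Footprint B) where
  carrier : B
  sem : ∀ p : Sg.P, Set (Sg.ar p ⟶ carrier)

/-- Homomorphisms of Σ-structures: truth of features is preserved. -/
def IsHom (U V : Str Sg) (ς : U.carrier ⟶ V.carrier) : Prop :=
  ∀ (p : Sg.P) (ι : Sg.ar p ⟶ U.carrier), ι ∈ U.sem p → ι ≫ ς ∈ V.sem p

/-- First-order feature expressions with arity an object of the base category. -/
inductive Expr (Sg : Footprint B) : B → Type (max u v)
  | atom {X : B} (p : Sg.P) (a : Sg.ar p ⟶ X) : Expr Sg X
  | top (X : B) : Expr Sg X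
  | bot (X : B) : Expr Sg X
  | and {X : B} : Expr Sg X → Expr Sg X → Expr Sg X
  | or {X : B} : Expr Sg X → Expr Sg X → Expr Sg X
  | not {X : B} : Expr Sg X → Expr Sg X
  | cex {X Y : B} (t : X ⟶ Y) : Expr Sg X → Expr Sg Y → Expr Sg X
  | call {X Y : B} (t : X ⟶ Y) : Expr Sg X → Expr Sg Y → Expr Sg X

/-- Semantics of feature expressions: the set of solutions in a Σ-structure. -/
def Expr.sem (U : Str Sg) : ∀ {X : B}, Expr Sg X → Set (X ⟶ U.carrier)
  | _, .atom p a => {ι | a ≫ ι ∈ U.sem p}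
  | _, .top _ => Set.univ
  | _, .bot _ => ∅
  | _, .and e₁ e₂ => e₁.sem U ∩ e₂.sem U
  | _, .or e₁ e₂ => e₁.sem U ∪ e₂.sem U
  | _, .not e => (e.sem U)ᶜ
  | _, .cex t e₁ e₂ => {ι | ι ∈ e₁.sem U → ∃ κ, t ≫ κ = ι ∧ κ ∈ e₂.sem U}
  | _, .call t e₁ e₂ => {ι | ι ∈ e₁.sem U → ∀ κ, t ≫ κ = ι → κ ∈ e₂.sem U}

/-- A Σ-constraint on a context `K`: an expression with arity `X` and a binding `X ⟶ K`. -/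
structure Constr (Sg : Footprint B) (K : B) where
  X : B
  e : Expr Sg X
  b : X ⟶ K

/-- Translation of constraints along a context morphism (post-composition of bindings). -/
def Constr.map {K G : B} (φ : K ⟶ G) (c : Constr Sg K) : Constr Sg G :=
  ⟨c.X, c.e, c.b ≫ φ⟩

/-- An interpretation of a context `K` in a Σ-structure. -/
structure Interp (Sg : Footprint B) (K : B) where
  U : Str Sg
  ι : K ⟶ U.carrier

/-- Reduct of interpretations along a context morphism (pre-composition). -/
def Interp.reduct {K G : B} (φ : K ⟶ G) (I : Interp Sg G) : Interp Sg K :=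
  ⟨I.U, φ ≫ I.ι⟩

/-- Satisfaction of a constraint by an interpretation. -/
def Interp.Sat {K : B} (I : Interp Sg K) (c : Constr Sg K) : Prop :=
  c.b ≫ I.ι ∈ c.e.sem I.U

/-- Semantic entailment between sets of constraints on a fixed context. -/
def Entails {K : B} (C D : Set (Constr Sg K)) : Prop :=
  ∀ I : Interp Sg K, (∀ c ∈ C, I.Sat c) → ∀ d ∈ D, I.Sat d

/-- A Σ-sketch: a context together with a set of constraints on it. -/
structure Sketch (Sg : Footprint B) where
  K : B
  C : Set (Constr Sg K)

/-- Sketch morphisms: context morphisms whose translated source constraints are entailed. -/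
def IsSketchMor (S T : Sketch Sg) (φ : S.K ⟶ T.K) : Prop :=
  Entails T.C (Constr.map φ '' S.C)

/-- A model of a sketch: an interpretation satisfying all its constraints. -/
def Interp.IsModel (S : Sketch Sg) (I : Interp Sg S.K) : Prop :=
  ∀ c ∈ S.C, I.Sat c

/-- Conservativity (model-expansiveness) of a Σ-structure w.r.t. a sketch rule `L ⇒^φ R`. -/
def Conservative (U : Str Sg) (L R : Sketch Sg) (φ : L.K ⟶ R.K) : Prop :=
  ∀ ι : L.K ⟶ U.carrier, Interp.IsModel L ⟨U, ι⟩ →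
    ∃ κ : R.K ⟶ U.carrier, φ ≫ κ = ι ∧ Interp.IsModel R ⟨U, κ⟩

/-- The minimalist semantic sketch of a Σ-structure. -/
def minSketch (U : Str Sg) : Sketch Sg :=
  ⟨U.carrier, {c | ∃ (p : Sg.P) (ι : Sg.ar p ⟶ U.carrier),
      ι ∈ U.sem p ∧ c = ⟨Sg.ar p, Expr.atom p (𝟙 (Sg.ar p)), ι⟩}⟩

/-- The minimalist semantic sketch construction is a full and faithful embedding of
Σ-structures into Σ-sketches. -/
theorem stmt14 (Sg : Footprint B) :
    (∀ (U V : Str Sg) (ς : U.carrier ⟶ V.carrier),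
      IsHom U V ς → IsSketchMor (minSketch U) (minSketch V) ς) ∧
    (∀ (U V : Str Sg),
      Function.Injective (fun ς : {ς : U.carrier ⟶ V.carrier // IsHom U V ς} =>
        (ς : U.carrier ⟶ V.carrier))) ∧
    (∀ (U V : Str Sg) (ς : U.carrier ⟶ V.carrier),
      IsSketchMor (minSketch U) (minSketch V) ς → IsHom U V ς) := by
  refine ⟨?_, ?_, ?_⟩
  · intro U V ς h I hI d hd
    obtain ⟨c, hc, rfl⟩ := hd
    obtain ⟨p, ι, hι, rfl⟩ := hc
    exact hI _ ⟨p, ι ≫ ς, h p ι hι, rfl⟩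
  · intro U V ς τ h
    exact Subtype.ext h
  · intro U V ς h p ι hι
    have hsat : ∀ c ∈ (minSketch V).C, Interp.Sat (Sg := Sg) ⟨V, 𝟙 V.carrier⟩ c := by
      rintro c ⟨q, κ, hκ, rfl⟩
      simpa [Interp.Sat, Expr.sem] using hκ
    have := h ⟨V, 𝟙 V.carrier⟩ hsat (Constr.map ς ⟨Sg.ar p, Expr.atom p (𝟙 (Sg.ar p)), ι⟩)
      ⟨_, ⟨p, ι, hι, rfl⟩, rfl⟩
    simp only [Interp.Sat, Expr.sem, Constr.map, Set.mem_setOf_eq,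
      Category.id_comp, Category.comp_id] at this
    rw [← Category.comp_id (ι ≫ ς)]
    exact this
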